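/- For every integer l ≥ 1 and every n ≥ 2l+1 there exists a family Q of 2l-element subsets of [n] with |Q| ≤ n(n−2l) that determines a non-minority ball (in the even-size model where the answer to a query may also be that the query has no majority ball). -/

import Mathlib

/-- `b` is a majority ball of `A` under coloring `c`:
strictly more than `|A|/2` balls of `A` have color `c b`. -/
def majBall {n : ℕ} (c : Fin n → Bool) (A : Finset (Fin n)) (b : Fin n) : Prop :=
  b ∈ A ∧ A.card < 2 * (A.filter fun x => c x = c b).card

/-- `b` is a non-minority ball of `A` under coloring `c`:
at least `|A|/2` balls of `A` have color `c b`. -/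
def nonMinBall {n : ℕ} (c : Fin n → Bool) (A : Finset (Fin n)) (b : Fin n) : Prop :=
  b ∈ A ∧ A.card ≤ 2 * (A.filter fun x => c x = c b).card

/-- A coloring `c` is legal for the answer function `a` on the query set `Q`. -/
def Legal {n : ℕ} (Q : Finset (Finset (Fin n))) (a : Finset (Fin n) → Fin n)
    (c : Fin n → Bool) : Prop :=
  ∀ T ∈ Q, majBall c T (a T)

/-- The query set `Q` determines a non-minority ball. -/
def Determines {n : ℕ} (Q : Finset (Finset (Fin n))) : Prop :=
  ∀ a : Finset (Fin n) → Fin n, (∀ T ∈ Q, a T ∈ T) → (∃ c, Legal Q a c) →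
    ∃ b : Fin n, ∀ c : Fin n → Bool, Legal Q a c → nonMinBall c Finset.univ b

/-- Co-degree: the number of queries of `Q` containing both `x` and `y`. -/
def codeg {n : ℕ} (Q : Finset (Finset (Fin n))) (x y : Fin n) : ℕ :=
  (Q.filter fun T => x ∈ T ∧ y ∈ T).card

/-- Legality in the even-query-size model: the answer to a query is either a
majority ball of the query, or `none`, meaning that the query has no majority ball. -/
def LegalE {n : ℕ} (Q : Finset (Finset (Fin n))) (a : Finset (Fin n) → Option (Fin n))
    (c : Fin n → Bool) : Prop :=
  ∀ T ∈ Q, (∀ b, a T = some b → majBall c T b) ∧ (a T = none → ∀ b ∈ T, ¬ majBall c T b)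

/-- The query set `Q` determines a non-minority ball in the even-query-size model. -/
def DeterminesE {n : ℕ} (Q : Finset (Finset (Fin n))) : Prop :=
  ∀ a : Finset (Fin n) → Option (Fin n), (∀ T ∈ Q, ∀ b, a T = some b → b ∈ T) →
    (∃ c, LegalE Q a c) →
    ∃ b : Fin n, ∀ c : Fin n → Bool, LegalE Q a c → nonMinBall c Finset.univ b

/-! ### Auxiliary construction: cyclic intervals

The query family consists of all sets `{x} ∪ I_j` where `I_j` is the cyclic
interval `{j, j+1, …, j+2l-2}` of size `2l-1` in `Fin n`, and `x` ranges over
all balls outside `I_j ∪ {j-1}` (so there are at most `n·(n-2l)` queries). -/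

section NMBAux
open Finset
open Fin.NatCast

variable {n : ℕ}

/-- cyclic interval of length `2l-1` starting at `j` -/
def nmbIv (l : ℕ) [NeZero n] (j : Fin n) : Finset (Fin n) :=
  (Finset.range (2*l-1)).image (fun t : ℕ => j + (t : Fin n))

/-- the admissible external balls for the interval starting at `j` -/
def nmbExt (l : ℕ) [NeZero n] (j : Fin n) : Finset (Fin n) :=
  (insert (j - 1) (nmbIv l j))ᶜ

/-- the query family -/
def nmbQ (l n : ℕ) [NeZero n] : Finset (Finset (Fin n)) :=
  Finset.univ.biUnion (fun j => (nmbExt l j).image (fun x => insert x (nmbIv l j)))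

lemma mem_nmbIv {l : ℕ} [NeZero n] {j y : Fin n} :
    y ∈ nmbIv l j ↔ ∃ t, t < 2*l-1 ∧ y = j + (t : Fin n) := by
  simp only [nmbIv, Finset.mem_image, Finset.mem_range]
  constructor
  · rintro ⟨t, ht, rfl⟩; exact ⟨t, ht, rfl⟩
  · rintro ⟨t, ht, rfl⟩; exact ⟨t, ht, rfl⟩

lemma fin_cast_inj {s t : ℕ} [NeZero n] (hs : s < n) (ht : t < n)
    (h : (s : Fin n) = (t : Fin n)) : s = t := by
  have := congrArg Fin.val h
  rwa [Fin.val_cast_of_lt hs, Fin.val_cast_of_lt ht] at this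

lemma card_nmbIv {l : ℕ} [NeZero n] (hn : 2*l+1 ≤ n) (j : Fin n) :
    (nmbIv l j).card = 2*l-1 := by
  rw [nmbIv, Finset.card_image_of_injOn, Finset.card_range]
  intro s hs t ht h
  simp only [Finset.coe_range, Set.mem_Iio] at hs ht
  exact fin_cast_inj (by omega) (by omega) (add_left_cancel h)

lemma sub_one_not_mem_nmbIv {l : ℕ} [NeZero n] (hn : 2*l+1 ≤ n) (j : Fin n) :
    j - 1 ∉ nmbIv l j := by
  rw [mem_nmbIv]
  rintro ⟨t, ht, hEq⟩
  have h2 : j + ((t : Fin n) + 1) = j + 0 := by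
    rw [← add_assoc, ← hEq, sub_add_cancel, add_zero]
  have h3 : ((t+1 : ℕ) : Fin n) = 0 := by push_cast; exact add_left_cancel h2
  have h4 := Nat.le_of_dvd (by omega) ((Fin.natCast_eq_zero).mp h3)
  omega

lemma mem_nmbExt {l : ℕ} [NeZero n] {j x : Fin n} :
    x ∈ nmbExt l j ↔ x ≠ j - 1 ∧ x ∉ nmbIv l j := by
  simp [nmbExt, not_or]

lemma card_insert_nmbIv {l : ℕ} [NeZero n] (hl : 1 ≤ l) (hn : 2*l+1 ≤ n) (j : Fin n) :
    (insert (j-1) (nmbIv l j)).card = 2*l := by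
  rw [Finset.card_insert_of_notMem (sub_one_not_mem_nmbIv hn j), card_nmbIv hn]
  omega

lemma card_nmbExt {l : ℕ} [NeZero n] (hl : 1 ≤ l) (hn : 2*l+1 ≤ n) (j : Fin n) :
    (nmbExt l j).card = n - 2*l := by
  rw [nmbExt, Finset.card_compl, card_insert_nmbIv hl hn, Fintype.card_fin]

lemma card_query {l : ℕ} [NeZero n] (hl : 1 ≤ l) (hn : 2*l+1 ≤ n) {j x : Fin n}
    (hx : x ∈ nmbExt l j) : (insert x (nmbIv l j)).card = 2*l := by
  rw [Finset.card_insert_of_notMem (mem_nmbExt.mp hx).2, card_nmbIv hn]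
  omega

lemma mem_nmbQ_of {l : ℕ} [NeZero n] {j x : Fin n} (hx : x ∈ nmbExt l j) :
    insert x (nmbIv l j) ∈ nmbQ l n := by
  simp only [nmbQ, Finset.mem_biUnion, Finset.mem_image]
  exact ⟨j, Finset.mem_univ j, x, hx, rfl⟩

lemma mem_nmbQ {l : ℕ} [NeZero n] {T : Finset (Fin n)} :
    T ∈ nmbQ l n ↔ ∃ j x, x ∈ nmbExt l j ∧ T = insert x (nmbIv l j) := by
  simp only [nmbQ, Finset.mem_biUnion, Finset.mem_image]
  constructor
  · rintro ⟨j, -, x, hx, rfl⟩; exact ⟨j, x, hx, rfl⟩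
  · rintro ⟨j, x, hx, rfl⟩; exact ⟨j, Finset.mem_univ j, x, hx, rfl⟩

lemma nmbQ_card_le {l : ℕ} [NeZero n] (hl : 1 ≤ l) (hn : 2*l+1 ≤ n) :
    (nmbQ l n).card ≤ n * (n - 2*l) := by
  refine le_trans (Finset.card_biUnion_le) ?_
  refine le_trans (Finset.sum_le_sum (fun j _ => Finset.card_image_le)) ?_
  simp only [card_nmbExt hl hn]
  rw [Finset.sum_const, Finset.card_univ, Fintype.card_fin, smul_eq_mul]

/-! ### Counting helpers -/

lemma cnt_filter_add (c : Fin n → Bool) (S : Finset (Fin n)) (e : Bool) :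
    (S.filter (fun y => c y = e)).card + (S.filter (fun y => c y = !e)).card = S.card := by
  have h := Finset.card_filter_add_card_filter_not (s := S) (p := fun y => c y = e)
  have h2 : S.filter (fun y => ¬ (c y = e)) = S.filter (fun y => c y = !e) := by
    apply Finset.filter_congr
    intro y _
    cases c y <;> cases e <;> simp
  rw [h2] at h
  exact h

lemma maj_le_cnt {l : ℕ} {c : Fin n → Bool} {T : Finset (Fin n)} {b : Fin n}
    (hT : T.card = 2*l) (h : majBall c T b) :
    l + 1 ≤ (T.filter (fun y => c y = c b)).card := by
  obtain ⟨-, h⟩ := h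
  omega

lemma bal_of_no_maj {l : ℕ} {c : Fin n → Bool} {T : Finset (Fin n)} (hl : 1 ≤ l)
    (hT : T.card = 2*l) (hno : ∀ b ∈ T, ¬ majBall c T b) (e : Bool) :
    (T.filter (fun y => c y = e)).card = l := by
  have key : ∀ e' : Bool, (T.filter (fun y => c y = e')).card ≤ l := by
    intro e'
    by_contra hgt
    push_neg at hgt
    obtain ⟨x, hx⟩ := Finset.card_pos.mp (show 0 < (T.filter (fun y => c y = e')).card by omega)
    rw [Finset.mem_filter] at hx
    refine hno x hx.1 ⟨hx.1, ?_⟩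
    rw [hT, hx.2]
    omega
  have h0 := cnt_filter_add c T e
  have h1 := key e
  have h2 := key !e
  omega

lemma bool_eq_or {a b : Bool} : a = b ∨ a = !b := by
  cases a <;> cases b <;> simp

lemma cnt_insert {c : Fin n → Bool} {S : Finset (Fin n)} {x : Fin n} (hx : x ∉ S) (e : Bool) :
    ((insert x S).filter (fun y => c y = e)).card
      = (S.filter (fun y => c y = e)).card + (if c x = e then 1 else 0) := by
  rw [Finset.filter_insert]
  split
  · rw [Finset.card_insert_of_notMem (fun hmem => hx (Finset.mem_of_mem_filter _ hmem))]
  · simp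

lemma nonmin_of_subset {c : Fin n → Bool} {b : Fin n} {S : Finset (Fin n)}
    (hS : ∀ y ∈ S, c y = c b) (hcard : n ≤ 2 * S.card) :
    nonMinBall c Finset.univ b := by
  refine ⟨Finset.mem_univ b, ?_⟩
  have hsub : S ⊆ Finset.univ.filter (fun y => c y = c b) :=
    fun y hy => Finset.mem_filter.mpr ⟨Finset.mem_univ y, hS y hy⟩
  have := Finset.card_le_card hsub
  rw [Finset.card_univ, Fintype.card_fin]
  omega

/-! ### The count along consecutive cyclic intervals (walk argument) -/

lemma cnt_Iv_eq_sum {l : ℕ} [NeZero n] (hn : 2*l+1 ≤ n) (c : Fin n → Bool) (e : Bool) (m : ℕ) :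
    ((nmbIv l ((m : Fin n))).filter (fun y => c y = e)).card
      = ∑ t ∈ Finset.range (2*l-1), (if c (((m + t : ℕ) : Fin n)) = e then 1 else 0) := by
  rw [nmbIv, Finset.filter_image, Finset.card_image_of_injOn, Finset.card_filter]
  · apply Finset.sum_congr rfl
    intro t _
    push_cast
    rfl
  · intro s hs t ht h
    simp only [Finset.coe_filter, Set.mem_setOf_eq, Finset.mem_range] at hs ht
    exact fin_cast_inj (by omega) (by omega) (add_left_cancel h)

lemma cnt_step {l : ℕ} [NeZero n] (hn : 2*l+1 ≤ n) (c : Fin n → Bool) (e : Bool) (m : ℕ) :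
    ((nmbIv l (((m+1 : ℕ) : Fin n))).filter (fun y => c y = e)).card
      + (if c ((m : ℕ) : Fin n) = e then 1 else 0)
    = ((nmbIv l ((m : Fin n))).filter (fun y => c y = e)).card
      + (if c (((m + (2*l-1) : ℕ) : Fin n)) = e then 1 else 0) := by
  rw [cnt_Iv_eq_sum hn, cnt_Iv_eq_sum hn]
  have h1 := Finset.sum_range_succ
    (fun t => (if c (((m + t : ℕ) : Fin n)) = e then 1 else 0)) (2*l-1)
  have h2 := Finset.sum_range_succ'
    (fun t => (if c (((m + t : ℕ) : Fin n)) = e then 1 else 0)) (2*l-1)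
  have h4 : (∑ t ∈ Finset.range (2*l-1), if c (((m + (t+1) : ℕ) : Fin n)) = e then 1 else 0)
      = ∑ t ∈ Finset.range (2*l-1), if c ((((m+1) + t : ℕ) : Fin n)) = e then 1 else 0 := by
    apply Finset.sum_congr rfl
    intro t _
    rw [show m + (t+1) = (m+1) + t by omega]
  rw [h4] at h2
  simp only [Nat.add_zero] at h2
  omega

lemma card_mem_nmbIv {l : ℕ} [NeZero n] (hn : 2*l+1 ≤ n) (y : Fin n) :
    (Finset.univ.filter (fun j => y ∈ nmbIv l j)).card = 2*l-1 := by
  have hset : Finset.univ.filter (fun j => y ∈ nmbIv l j)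
      = (Finset.range (2*l-1)).image (fun t : ℕ => y - (t : Fin n)) := by
    ext j
    simp only [Finset.mem_filter, Finset.mem_univ, true_and, Finset.mem_image,
      Finset.mem_range, mem_nmbIv]
    constructor
    · rintro ⟨t, ht, rfl⟩
      exact ⟨t, ht, add_sub_cancel_right _ _⟩
    · rintro ⟨t, ht, rfl⟩
      exact ⟨t, ht, (sub_add_cancel _ _).symm⟩
  rw [hset, Finset.card_image_of_injOn, Finset.card_range]
  intro s hs t ht h
  simp only [Finset.coe_range, Set.mem_Iio] at hs ht
  exact fin_cast_inj (by omega) (by omega) (sub_right_injective h)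

lemma double_count {l : ℕ} [NeZero n] (hn : 2*l+1 ≤ n) (c : Fin n → Bool) (e : Bool) :
    ∑ j : Fin n, ((nmbIv l j).filter (fun y => c y = e)).card
      = (2*l-1) * (Finset.univ.filter (fun y => c y = e)).card := by
  calc ∑ j : Fin n, ((nmbIv l j).filter (fun y => c y = e)).card
      = ∑ j : Fin n, ∑ y : Fin n, (if y ∈ nmbIv l j ∧ c y = e then 1 else 0) := by
        refine Finset.sum_congr rfl (fun j _ => ?_)
        have hEq : (nmbIv l j).filter (fun y => c y = e)
            = Finset.univ.filter (fun y => y ∈ nmbIv l j ∧ c y = e) := by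
          ext y; simp
        rw [hEq, Finset.card_filter]
    _ = ∑ y : Fin n, ∑ j : Fin n, (if y ∈ nmbIv l j ∧ c y = e then 1 else 0) :=
        Finset.sum_comm
    _ = ∑ y : Fin n, (if c y = e then (2*l-1) else 0) := by
        refine Finset.sum_congr rfl (fun y _ => ?_)
        by_cases hcy : c y = e
        · simp only [hcy, and_true, if_true]
          rw [← Finset.card_filter]
          exact card_mem_nmbIv hn y
        · simp [hcy]
    _ = (2*l-1) * (Finset.univ.filter (fun y => c y = e)).card := by
        rw [← Finset.sum_filter, Finset.sum_const, smul_eq_mul, mul_comm]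

lemma dichotomy {l : ℕ} [NeZero n] (hl : 1 ≤ l) (hn : 2*l+1 ≤ n) (c : Fin n → Bool)
    (hnear : ∀ j : Fin n, ∀ e : Bool, ((nmbIv l j).filter (fun y => c y = e)).card ≠ l) :
    ∃ δ : Bool, ∀ j : Fin n, ((nmbIv l j).filter (fun y => c y = δ)).card + 2 ≤ l := by
  have hadd : ∀ j : Fin n, ((nmbIv l j).filter (fun y => c y = true)).card
      + ((nmbIv l j).filter (fun y => c y = false)).card = 2*l-1 := by
    intro j
    have := cnt_filter_add c (nmbIv l j) true
    rw [card_nmbIv hn] at this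
    simpa using this
  have hsplit : ∀ j : Fin n, l+1 ≤ ((nmbIv l j).filter (fun y => c y = true)).card
      ∨ ((nmbIv l j).filter (fun y => c y = true)).card + 2 ≤ l := by
    intro j
    have h1 := hnear j true
    have h2 := hnear j false
    have h3 := hadd j
    omega
  by_cases hhi : ∀ j : Fin n, l+1 ≤ ((nmbIv l j).filter (fun y => c y = true)).card
  · refine ⟨false, fun j => ?_⟩
    have := hadd j
    have := hhi j
    omega
  · push_neg at hhi
    obtain ⟨j0, hj0⟩ := hhi
    have hj0' : ((nmbIv l j0).filter (fun y => c y = true)).card + 2 ≤ l :=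
      (hsplit j0).resolve_left (by omega)
    refine ⟨true, fun j => ?_⟩
    by_contra hcon
    have hj : l+1 ≤ ((nmbIv l j).filter (fun y => c y = true)).card :=
      (hsplit j).resolve_right (by omega)
    have key : ∀ i : ℕ,
        ((nmbIv l (((j0.val + i : ℕ) : Fin n))).filter (fun y => c y = true)).card + 2 ≤ l := by
      intro i
      induction i with
      | zero =>
        have h0 : ((j0.val + 0 : ℕ) : Fin n) = j0 := by simp [Fin.cast_val_eq_self]
        rw [h0]
        exact hj0'
      | succ i ih =>
        have hstep := cnt_step hn c true (j0.val + i)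
        rw [show (j0.val + (i+1)) = (j0.val + i) + 1 by omega]
        have hsp := hsplit (((j0.val + i + 1 : ℕ)) : Fin n)
        set u := (if c (((j0.val + i : ℕ)) : Fin n) = true then 1 else 0) with hu
        set v := (if c (((j0.val + i + (2*l-1) : ℕ)) : Fin n) = true then 1 else 0) with hv
        have hub : u ≤ 1 := by rw [hu]; split <;> omega
        have hvb : v ≤ 1 := by rw [hv]; split <;> omega
        omega
    have hd : ((j0.val + (j - j0).val : ℕ) : Fin n) = j := by
      push_cast
      exact add_sub_cancel j0 j
    have hfin := key (j - j0).val
    rw [hd] at hfin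
    omega

/-! ### Consequence of a `none` answer: full determination outside the interval -/

lemma case1_facts {l : ℕ} [NeZero n] (hl : 1 ≤ l) (hn : 2*l+1 ≤ n)
    {a : Finset (Fin n) → Option (Fin n)} {c : Fin n → Bool} (hc : LegalE (nmbQ l n) a c)
    {j xh : Fin n} (hxhE : xh ∈ nmbExt l j) (hxhnone : a (insert xh (nmbIv l j)) = none) :
    ((nmbIv l j).filter (fun y => c y = c xh)).card + 1 = l
    ∧ ((nmbIv l j).filter (fun y => c y = !(c xh))).card = l
    ∧ ∀ x ∈ nmbExt l j,
        (a (insert x (nmbIv l j)) = none → c x = c xh)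
        ∧ (a (insert x (nmbIv l j)) ≠ none → c x = !(c xh)) := by
  classical
  have hbal : ∀ {x : Fin n}, x ∈ nmbExt l j → a (insert x (nmbIv l j)) = none →
      ∀ e : Bool, ((insert x (nmbIv l j)).filter (fun y => c y = e)).card = l := by
    intro x hx hnone e
    exact bal_of_no_maj hl (card_query hl hn hx) ((hc _ (mem_nmbQ_of hx)).2 hnone) e
  have hxhIv : xh ∉ nmbIv l j := (mem_nmbExt.mp hxhE).2
  have hIa : ((nmbIv l j).filter (fun y => c y = c xh)).card + 1 = l := by
    have h := hbal hxhE hxhnone (c xh)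
    rw [cnt_insert hxhIv, if_pos rfl] at h
    omega
  have hIb : ((nmbIv l j).filter (fun y => c y = !(c xh))).card = l := by
    have h := hbal hxhE hxhnone (!(c xh))
    rw [cnt_insert hxhIv, if_neg (by cases c xh <;> decide)] at h
    omega
  refine ⟨hIa, hIb, fun x hx => ⟨?_, ?_⟩⟩
  · intro hnone
    rcases bool_eq_or (a := c x) (b := c xh) with h | h
    · exact h
    · exfalso
      have hxIv : x ∉ nmbIv l j := (mem_nmbExt.mp hx).2
      have hb := hbal hx hnone (c x)
      rw [cnt_insert hxIv, if_pos rfl, h, hIb] at hb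
      omega
  · intro hsome
    rcases bool_eq_or (a := c x) (b := c xh) with h | h
    · exfalso
      obtain ⟨β', hβ'⟩ := Option.ne_none_iff_exists'.mp hsome
      have hmaj := maj_le_cnt (card_query hl hn hx) ((hc _ (mem_nmbQ_of hx)).1 β' hβ')
      have hxIv : x ∉ nmbIv l j := (mem_nmbExt.mp hx).2
      have hTe : ((insert x (nmbIv l j)).filter (fun y => c y = c xh)).card = l := by
        rw [cnt_insert hxIv, if_pos h]
        omega
      have hTne : ((insert x (nmbIv l j)).filter (fun y => c y = !(c xh))).card = l := by
        rw [cnt_insert hxIv, if_neg (by rw [h]; cases c xh <;> decide), hIb]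
        omega
      rcases bool_eq_or (a := c β') (b := c xh) with hb | hb
      · simp only [hb] at hmaj
        omega
      · simp only [hb] at hmaj
        omega
    · exact h

end NMBAux

theorem stmt_9 (l n : ℕ) (hl : 1 ≤ l) (hn : 2 * l + 1 ≤ n) :
    ∃ Q : Finset (Finset (Fin n)), (∀ T ∈ Q, T.card = 2 * l) ∧
      Q.card ≤ n * (n - 2 * l) ∧ DeterminesE Q := by
  haveI : NeZero n := ⟨by omega⟩
  classical
  refine ⟨nmbQ l n, ?_, nmbQ_card_le hl hn, ?_⟩
  · intro T hT
    obtain ⟨j, x, hx, rfl⟩ := mem_nmbQ.mp hT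
    exact card_query hl hn hx
  · intro a ha _hex
    by_cases hf : ∃ j : Fin n, ∃ x ∈ nmbExt l j, a (insert x (nmbIv l j)) = none
    · -- Case 1: some query is answered `none`
      obtain ⟨j, xh, hxhE, hxhnone⟩ := hf
      set N := (nmbExt l j).filter (fun x => a (insert x (nmbIv l j)) = none) with hNdef
      set M := (nmbExt l j).filter (fun x => ¬ a (insert x (nmbIv l j)) = none) with hMdef
      have hNM : N.card + M.card = (nmbExt l j).card :=
        Finset.card_filter_add_card_filter_not
          (p := fun x => a (insert x (nmbIv l j)) = none)
      have hExtCard : (nmbExt l j).card + 2*l = n := by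
        rw [card_nmbExt hl hn]; omega
      have hMsub : ∀ y ∈ M, y ∈ nmbExt l j := fun y hy => (Finset.mem_filter.mp hy).1
      have hNsub : ∀ y ∈ N, y ∈ nmbExt l j := fun y hy => (Finset.mem_filter.mp hy).1
      have hExtIv : ∀ y ∈ nmbExt l j, y ∉ nmbIv l j := fun y hy => (mem_nmbExt.mp hy).2
      have hExtx0 : ∀ y ∈ nmbExt l j, y ≠ j - 1 := fun y hy => (mem_nmbExt.mp hy).1
      by_cases h1 : n ≤ 2*(M.card + l)
      · -- the `some`-answered external class is big
        have hMne : M.Nonempty := Finset.card_pos.mp (by omega)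
        obtain ⟨x1, hx1⟩ := hMne
        refine ⟨x1, fun c hc => ?_⟩
        obtain ⟨hIa, hIb, hext⟩ := case1_facts hl hn hc hxhE hxhnone
        have hcx1 : c x1 = !(c xh) :=
          (hext x1 (hMsub x1 hx1)).2 (Finset.mem_filter.mp hx1).2
        refine nonmin_of_subset (S := M ∪ (nmbIv l j).filter (fun y => c y = !(c xh)))
            ?_ ?_
        · intro y hy
          rw [hcx1]
          rcases Finset.mem_union.mp hy with hy | hy
          · exact (hext y (hMsub y hy)).2 (Finset.mem_filter.mp hy).2
          · exact (Finset.mem_filter.mp hy).2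
        · rw [Finset.card_union_of_disjoint (Finset.disjoint_left.mpr
            (fun y hyM hyI => hExtIv y (hMsub y hyM) (Finset.mem_of_mem_filter _ hyI)))]
          omega
      by_cases h2 : 2*(M.card + l) + 2 ≤ n
      · -- the `none`-answered external class is big
        refine ⟨xh, fun c hc => ?_⟩
        obtain ⟨hIa, hIb, hext⟩ := case1_facts hl hn hc hxhE hxhnone
        refine nonmin_of_subset (S := N ∪ (nmbIv l j).filter (fun y => c y = c xh))
            ?_ ?_
        · intro y hy
          rcases Finset.mem_union.mp hy with hy | hy
          · exact (hext y (hNsub y hy)).1 (Finset.mem_filter.mp hy).2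
          · exact (Finset.mem_filter.mp hy).2
        · rw [Finset.card_union_of_disjoint (Finset.disjoint_left.mpr
            (fun y hyN hyI => hExtIv y (hNsub y hyN) (Finset.mem_of_mem_filter _ hyI)))]
          omega
      · -- borderline: the dropped ball `j-1` is in the bigger class
        have h3 : 2*(M.card + l) + 1 = n := by omega
        refine ⟨j - 1, fun c hc => ?_⟩
        obtain ⟨hIa, hIb, hext⟩ := case1_facts hl hn hc hxhE hxhnone
        have hx0Iv : (j-1) ∉ nmbIv l j := sub_one_not_mem_nmbIv hn j
        rcases bool_eq_or (a := c (j-1)) (b := c xh) with hb | hb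
        · refine nonmin_of_subset
            (S := insert (j-1) (N ∪ (nmbIv l j).filter (fun y => c y = c xh))) ?_ ?_
          · intro y hy
            rw [hb]
            rcases Finset.mem_insert.mp hy with rfl | hy
            · exact hb
            rcases Finset.mem_union.mp hy with hy | hy
            · exact (hext y (hNsub y hy)).1 (Finset.mem_filter.mp hy).2
            · exact (Finset.mem_filter.mp hy).2
          · rw [Finset.card_insert_of_notMem, Finset.card_union_of_disjoint
              (Finset.disjoint_left.mpr
               (fun y hyN hyI => hExtIv y (hNsub y hyN) (Finset.mem_of_mem_filter _ hyI)))]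
            · omega
            · intro hmem
              rcases Finset.mem_union.mp hmem with hy | hy
              · exact hExtx0 _ (hNsub _ hy) rfl
              · exact hx0Iv (Finset.mem_of_mem_filter _ hy)
        · refine nonmin_of_subset
            (S := insert (j-1) (M ∪ (nmbIv l j).filter (fun y => c y = !(c xh)))) ?_ ?_
          · intro y hy
            rw [hb]
            rcases Finset.mem_insert.mp hy with rfl | hy
            · exact hb
            rcases Finset.mem_union.mp hy with hy | hy
            · exact (hext y (hMsub y hy)).2 (Finset.mem_filter.mp hy).2
            · exact (Finset.mem_filter.mp hy).2
          · rw [Finset.card_insert_of_notMem, Finset.card_union_of_disjoint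
              (Finset.disjoint_left.mpr
               (fun y hyM hyI => hExtIv y (hMsub y hyM) (Finset.mem_of_mem_filter _ hyI)))]
            · omega
            · intro hmem
              rcases Finset.mem_union.mp hmem with hy | hy
              · exact hExtx0 _ (hMsub _ hy) rfl
              · exact hx0Iv (Finset.mem_of_mem_filter _ hy)
    · -- Case 2: all queries answered `some`
      push_neg at hf
      have hx0ex : (nmbExt l (0 : Fin n)).Nonempty :=
        Finset.card_pos.mp (by rw [card_nmbExt hl hn]; omega)
      obtain ⟨x0, hx0⟩ := hx0ex
      obtain ⟨β, hβ⟩ := Option.ne_none_iff_exists'.mp (hf 0 x0 hx0)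
      refine ⟨β, fun c hc => ?_⟩
      have hmajq0 : l + 1 ≤ ((insert x0 (nmbIv l 0)).filter (fun y => c y = c β)).card :=
        maj_le_cnt (card_query hl hn hx0) ((hc _ (mem_nmbQ_of hx0)).1 β hβ)
      by_cases hnear : ∃ j : Fin n, ∃ e : Bool, ((nmbIv l j).filter (fun y => c y = e)).card = l
      · -- subcase (a): some near-balanced interval; coloring is near-monochromatic
        obtain ⟨j, e, hje⟩ := hnear
        have hcnts : ((nmbIv l j).filter (fun y => c y = !e)).card + 1 = l := by
          have h := cnt_filter_add c (nmbIv l j) e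
          rw [card_nmbIv hn, hje] at h
          omega
        have hext : ∀ x ∈ nmbExt l j, c x = e := by
          intro x hx
          rcases bool_eq_or (a := c x) (b := e) with h | h
          · exact h
          · exfalso
            obtain ⟨β', hβ'⟩ := Option.ne_none_iff_exists'.mp (hf j x hx)
            have hmaj := maj_le_cnt (card_query hl hn hx) ((hc _ (mem_nmbQ_of hx)).1 β' hβ')
            have hxIv : x ∉ nmbIv l j := (mem_nmbExt.mp hx).2
            have hTe : ((insert x (nmbIv l j)).filter (fun y => c y = e)).card = l := by
              rw [cnt_insert hxIv, if_neg (by rw [h]; cases e <;> decide), hje]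
              omega
            have hTne : ((insert x (nmbIv l j)).filter (fun y => c y = !e)).card = l := by
              rw [cnt_insert hxIv, if_pos h]
              omega
            rcases bool_eq_or (a := c β') (b := e) with hbb | hbb
            · simp only [hbb] at hmaj
              omega
            · simp only [hbb] at hmaj
              omega
        have hclass : (nmbExt l j).card + l
            ≤ (Finset.univ.filter (fun y => c y = e)).card := by
          have hsub : nmbExt l j ∪ (nmbIv l j).filter (fun y => c y = e)
              ⊆ Finset.univ.filter (fun y => c y = e) := by
            intro y hy
            refine Finset.mem_filter.mpr ⟨Finset.mem_univ y, ?_⟩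
            rcases Finset.mem_union.mp hy with hy | hy
            · exact hext y hy
            · exact (Finset.mem_filter.mp hy).2
          have := Finset.card_le_card hsub
          rw [Finset.card_union_of_disjoint (Finset.disjoint_left.mpr
            (fun y hyE hyI => (mem_nmbExt.mp hyE).2 (Finset.mem_of_mem_filter _ hyI)))] at this
          omega
        have hExtCard : (nmbExt l j).card + 2*l = n := by
          rw [card_nmbExt hl hn]; omega
        have htot := cnt_filter_add c Finset.univ e
        rw [Finset.card_univ, Fintype.card_fin] at htot
        have hcβ : c β = e := by
          rcases bool_eq_or (a := c β) (b := e) with h | h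
          · exact h
          · exfalso
            have hsubq : (insert x0 (nmbIv l 0)).filter (fun y => c y = c β)
                ⊆ Finset.univ.filter (fun y => c y = !e) := by
              intro y hy
              refine Finset.mem_filter.mpr ⟨Finset.mem_univ y, ?_⟩
              rw [← h]
              exact (Finset.mem_filter.mp hy).2
            have hle := Finset.card_le_card hsubq
            omega
        refine nonmin_of_subset
          (S := nmbExt l j ∪ (nmbIv l j).filter (fun y => c y = e)) ?_ ?_
        · intro y hy
          rw [hcβ]
          rcases Finset.mem_union.mp hy with hy | hy
          · exact hext y hy
          · exact (Finset.mem_filter.mp hy).2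
        · rw [Finset.card_union_of_disjoint (Finset.disjoint_left.mpr
            (fun y hyE hyI => (mem_nmbExt.mp hyE).2 (Finset.mem_of_mem_filter _ hyI))), hje]
          omega
      · -- subcase (b): all intervals far from balanced
        push_neg at hnear
        obtain ⟨δ, hδ⟩ := dichotomy hl hn c (fun j e => hnear j e)
        have hdc := double_count hn c δ
        have hsum : ∑ j : Fin n, (((nmbIv l j).filter (fun y => c y = δ)).card + 2)
            ≤ ∑ _actualj : Fin n, l := Finset.sum_le_sum (fun j _ => hδ j)
        rw [Finset.sum_add_distrib, Finset.sum_const, Finset.sum_const, Finset.card_univ,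
          Fintype.card_fin, smul_eq_mul, smul_eq_mul, hdc] at hsum
        set B := (Finset.univ.filter (fun y => c y = δ)).card with hBdef
        have h2B : 2*B ≤ n := by
          set k := 2*l-1 with hkdef
          have hk1 : k + 1 = 2*l := by omega
          have m2 : 2*(n*l) = n*k + n := by
            have hnl : 2*(n*l) = n*(2*l) := by ring
            rw [hnl, ← hk1]
            ring
          have m1 : 2*(k*B + n*2) ≤ 2*(n*l) := Nat.mul_le_mul_left 2 hsum
          have m3 : k*(2*B) + 4*n ≤ n*k + n := by
            calc k*(2*B) + 4*n = 2*(k*B + n*2) := by ring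
              _ ≤ 2*(n*l) := m1
              _ = n*k + n := m2
          have m4 : k*(2*B) ≤ k*n := by
            have hc5 : n*k = k*n := Nat.mul_comm n k
            linarith
          exact Nat.le_of_mul_le_mul_left m4 (by omega)
        have hx0Iv : x0 ∉ nmbIv l 0 := (mem_nmbExt.mp hx0).2
        have hcβ : c β = !δ := by
          rcases bool_eq_or (a := c β) (b := δ) with h | h
          · exfalso
            simp only [h] at hmajq0
            rw [cnt_insert hx0Iv] at hmajq0
            have hb0 := hδ (0 : Fin n)
            have hite : (if c x0 = δ then 1 else 0) ≤ 1 := by split <;> omega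
            omega
          · exact h
        refine ⟨Finset.mem_univ β, ?_⟩
        rw [Finset.card_univ, Fintype.card_fin]
        have htot := cnt_filter_add c Finset.univ δ
        rw [Finset.card_univ, Fintype.card_fin] at htot
        simp only [hcβ]
        omega
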